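/- Let X be a pointed metric space. The evaluation map f ↦ T_f, where T_f(φ) = φ(f) for φ ∈ F(X), is a topological isomorphism from (Lip₀(X), τ_γ) onto F(X)'_c, the dual of the Banach space F(X) endowed with the topology of uniform convergence on the convex balanced compact subsets of F(X). -/

import Mathlib

open Filter Topology Set Pointwise

set_option linter.unusedSectionVars false
set_option linter.unusedVariables false

noncomputable section

namespace LipApprox

variable (X : Type*) [MetricSpace X] (x₀ : X)
variable (F : Type*) [NormedAddCommGroup F] [NormedSpace ℝ F]

/-- The Lipschitz maps `X → F` vanishing at the base point, as a submodule of `X → F`. -/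
def lip0Submodule : Submodule ℝ (X → F) where
  carrier := {f | (∃ K, LipschitzWith K f) ∧ f x₀ = 0}
  add_mem' := by
    rintro f g ⟨⟨Kf, hf⟩, hf0⟩ ⟨⟨Kg, hg⟩, hg0⟩
    exact ⟨⟨Kf + Kg, hf.add hg⟩, by simp [hf0, hg0]⟩
  zero_mem' := ⟨⟨0, LipschitzWith.const 0⟩, rfl⟩
  smul_mem' := by
    rintro c f ⟨⟨K, hf⟩, hf0⟩
    exact ⟨⟨‖c‖₊ * K, (lipschitzWith_smul c).comp hf⟩, by simp [hf0]⟩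

/-- The space `Lip₀(X, F)` of Lipschitz maps from `X` to `F` vanishing at the base point. -/
def lip0 : Type _ := ↥(lip0Submodule X x₀ F)

instance : AddCommGroup (lip0 X x₀ F) :=
  inferInstanceAs (AddCommGroup ↥(lip0Submodule X x₀ F))

instance : Module ℝ (lip0 X x₀ F) :=
  inferInstanceAs (Module ℝ ↥(lip0Submodule X x₀ F))

variable {X x₀ F}

/-- The underlying function of an element of `Lip₀(X, F)`. -/
def toFun' (f : lip0 X x₀ F) : X → F := f.1

lemma exists_lip (f : lip0 X x₀ F) : ∃ K, LipschitzWith K (toFun' f) := f.2.1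

lemma apply_base (f : lip0 X x₀ F) : toFun' f x₀ = 0 := f.2.2

lemma toFun'_add (f g : lip0 X x₀ F) : toFun' (f + g) = toFun' f + toFun' g := rfl
lemma toFun'_neg (f : lip0 X x₀ F) : toFun' (-f) = -toFun' f := rfl
lemma toFun'_smul (c : ℝ) (f : lip0 X x₀ F) : toFun' (c • f) = c • toFun' f := rfl
lemma toFun'_zero : toFun' (0 : lip0 X x₀ F) = 0 := rfl

variable (X x₀ F) in
/-- The Lipschitz norm of an element of `Lip₀(X, F)`. -/
def lipNorm (f : lip0 X x₀ F) : ℝ :=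
  ⨆ p : X × X, ‖toFun' f p.1 - toFun' f p.2‖ / dist p.1 p.2

lemma ratio_le (f : lip0 X x₀ F) {K : NNReal} (hK : LipschitzWith K (toFun' f))
    (p : X × X) : ‖toFun' f p.1 - toFun' f p.2‖ / dist p.1 p.2 ≤ K := by
  rcases eq_or_ne p.1 p.2 with h | h
  · simp [h]
  · rw [div_le_iff₀ (dist_pos.2 h), ← dist_eq_norm]
    exact hK.dist_le_mul p.1 p.2

lemma bddAbove_ratio (f : lip0 X x₀ F) :
    BddAbove (Set.range fun p : X × X =>
      ‖toFun' f p.1 - toFun' f p.2‖ / dist p.1 p.2) := by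
  obtain ⟨K, hK⟩ := exists_lip f
  exact ⟨K, by rintro r ⟨p, rfl⟩; exact ratio_le f hK p⟩

lemma nonempty_pairs (x₀ : X) : Nonempty (X × X) := ⟨(x₀, x₀)⟩

lemma ratio_le_lipNorm (f : lip0 X x₀ F) (p : X × X) :
    ‖toFun' f p.1 - toFun' f p.2‖ / dist p.1 p.2 ≤ lipNorm X x₀ F f :=
  le_ciSup (bddAbove_ratio f) p

lemma lipNorm_nonneg (f : lip0 X x₀ F) : 0 ≤ lipNorm X x₀ F f := by
  have := ratio_le_lipNorm (x₀ := x₀) f (x₀, x₀)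
  simpa using this

lemma norm_sub_le_lipNorm (f : lip0 X x₀ F) (x y : X) :
    ‖toFun' f x - toFun' f y‖ ≤ lipNorm X x₀ F f * dist x y := by
  rcases eq_or_ne x y with rfl | h
  · simp
  · have := ratio_le_lipNorm (x₀ := x₀) f (x, y)
    rw [div_le_iff₀ (dist_pos.2 h)] at this
    simpa using this

instance : NormedAddCommGroup (lip0 X x₀ F) :=
  AddGroupNorm.toNormedAddCommGroup
    { toFun := lipNorm X x₀ F
      map_zero' := by
        haveI : Nonempty (X × X) := nonempty_pairs x₀
        have h0 : ∀ p : X × X,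
            ‖toFun' (0 : lip0 X x₀ F) p.1 - toFun' (0 : lip0 X x₀ F) p.2‖ /
              dist p.1 p.2 = 0 := by
          intro p; rw [toFun'_zero]; simp
        simp only [lipNorm, h0, ciSup_const]
      add_le' := by
        intro f g
        haveI : Nonempty (X × X) := nonempty_pairs x₀
        apply ciSup_le
        intro p
        rcases eq_or_ne p.1 p.2 with h | h
        · simp only [h, dist_self, div_zero]
          exact add_nonneg (lipNorm_nonneg f) (lipNorm_nonneg g)
        · have hnum : ‖toFun' (f + g) p.1 - toFun' (f + g) p.2‖ ≤
              ‖toFun' f p.1 - toFun' f p.2‖ + ‖toFun' g p.1 - toFun' g p.2‖ := by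
            rw [toFun'_add, Pi.add_apply, Pi.add_apply, add_sub_add_comm]
            exact norm_add_le _ _
          calc ‖toFun' (f + g) p.1 - toFun' (f + g) p.2‖ / dist p.1 p.2
              ≤ (‖toFun' f p.1 - toFun' f p.2‖ +
                  ‖toFun' g p.1 - toFun' g p.2‖) / dist p.1 p.2 := by gcongr
            _ = ‖toFun' f p.1 - toFun' f p.2‖ / dist p.1 p.2 +
                  ‖toFun' g p.1 - toFun' g p.2‖ / dist p.1 p.2 := add_div _ _ _
            _ ≤ lipNorm X x₀ F f + lipNorm X x₀ F g :=
                add_le_add (ratio_le_lipNorm f p) (ratio_le_lipNorm g p)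
      neg' := by
        intro f
        simp only [lipNorm]
        congr 1
        funext p
        congr 1
        rw [toFun'_neg, Pi.neg_apply, Pi.neg_apply, neg_sub_neg, norm_sub_rev]
      eq_zero_of_map_eq_zero' := by
        intro f hf
        have hzero : ∀ x : X, toFun' f x = 0 := by
          intro x
          rcases eq_or_ne x x₀ with h | h
          · rw [h]; exact apply_base f
          · have hf' : lipNorm X x₀ F f = 0 := hf
            have h1 := ratio_le_lipNorm (x₀ := x₀) f (x, x₀)
            rw [hf', div_le_iff₀ (dist_pos.2 h), zero_mul] at h1
            have h2 : toFun' f x - toFun' f x₀ = 0 := by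
              simpa using norm_le_zero_iff.1 h1
            have h3 := apply_base f
            rw [h3, sub_zero] at h2
            exact h2
        exact Subtype.ext (funext hzero) }

lemma lip0_norm_def (f : lip0 X x₀ F) : ‖f‖ = lipNorm X x₀ F f := rfl

instance : NormedSpace ℝ (lip0 X x₀ F) where
  norm_smul_le c f := by
    haveI : Nonempty (X × X) := nonempty_pairs x₀
    rw [lip0_norm_def, lip0_norm_def, lipNorm]
    apply ciSup_le
    intro p
    have h1 : toFun' (c • f) p.1 - toFun' (c • f) p.2 =
        c • (toFun' f p.1 - toFun' f p.2) := by
      rw [toFun'_smul, Pi.smul_apply, Pi.smul_apply, smul_sub]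
    rw [h1, norm_smul]
    rcases eq_or_ne p.1 p.2 with h | h
    · simp only [h, dist_self, div_zero]
      exact mul_nonneg (norm_nonneg c) (lipNorm_nonneg f)
    · rw [mul_div_assoc]
      exact mul_le_mul_of_nonneg_left (ratio_le_lipNorm (x₀ := x₀) f p) (norm_nonneg c)

variable (X x₀ F)

/-- Elements of `Lip₀(X, F)` as continuous maps. -/
def toCM (f : lip0 X x₀ F) : C(X, F) :=
  ⟨toFun' f, by
    obtain ⟨K, hK⟩ := exists_lip f
    exact hK.continuous⟩

/-- The compact-open topology `τ₀` on `Lip₀(X, F)`. -/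
def tau0 : TopologicalSpace (lip0 X x₀ F) :=
  TopologicalSpace.induced (toCM X x₀ F) ContinuousMap.compactOpen

/-- The set `γ(U) = ⋃ₙ (U₀ ∩ B + U₁ ∩ 2B + ⋯ + Uₙ ∩ 2ⁿB)` from the definition of the
mixed topology, where `B` is the closed unit ball of `Lip₀(X, F)`. -/
def gammaSet (U : ℕ → Set (lip0 X x₀ F)) : Set (lip0 X x₀ F) :=
  ⋃ n : ℕ, ∑ i ∈ Finset.range (n + 1), (U i ∩ {f | ‖f‖ ≤ 2 ^ i})

/-- The mixed topology `τ_γ = γ[Lip, τ₀]` on `Lip₀(X, F)`: the topology whose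
neighborhoods of a point `f` are generated by the translates by `f` of the sets `γ(U)`,
where `U` runs over all sequences of convex balanced `τ₀`-neighborhoods of zero. -/
def tauGamma : TopologicalSpace (lip0 X x₀ F) :=
  TopologicalSpace.mkOfNhds fun f =>
    ⨅ (U : ℕ → Set (lip0 X x₀ F))
      (_ : ∀ n, U n ∈ @nhds _ (tau0 X x₀ F) 0 ∧ Convex ℝ (U n) ∧ Balanced ℝ (U n)),
      Filter.principal ((f + ·) '' gammaSet X x₀ F U)

/-- A subset of `Lip₀(X, F)` is norm bounded if the Lipschitz norms of its members are
uniformly bounded. -/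
def NormBounded (B : Set (lip0 X x₀ F)) : Prop :=
  ∃ C : ℝ, ∀ f ∈ B, ‖f‖ ≤ C

/-- The locally convex topology `γτ_γ` on `Lip₀(X, F)`, generated by the seminorms
`f ↦ sup_n αₙ ‖f xₙ - f yₙ‖ / d(xₙ, yₙ)` where `(αₙ)` is a sequence of positive reals
tending to zero and `((xₙ, yₙ))` is a sequence of pairs of distinct points of `X`. -/
def gammaTauGamma : TopologicalSpace (lip0 X x₀ F) :=
  ⨅ (α : ℕ → ℝ) (z : ℕ → X × X)
    (_ : (∀ n, 0 < α n) ∧ Filter.Tendsto α Filter.atTop (nhds 0) ∧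
      ∀ n, (z n).1 ≠ (z n).2),
    TopologicalSpace.induced
      (fun f => UniformFun.ofFun fun n =>
        (α n / dist (z n).1 (z n).2) • (toFun' f (z n).1 - toFun' f (z n).2))
      inferInstance

/-- Evaluation at a point of `X`, as a linear functional on `Lip₀(X)`. -/
def evalLM (x : X) : lip0 X x₀ ℝ →ₗ[ℝ] ℝ where
  toFun f := toFun' f x
  map_add' f g := rfl
  map_smul' c f := rfl

/-- Evaluation at a point of `X`, as a continuous linear functional on `Lip₀(X)`. -/
def evalCLM (x : X) : lip0 X x₀ ℝ →L[ℝ] ℝ :=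
  LinearMap.mkContinuous (evalLM X x₀ x) (dist x x₀)
    (fun f => by
      have h0 : toFun' f x₀ = 0 := apply_base f
      have h := norm_sub_le_lipNorm (x₀ := x₀) f x x₀
      rw [h0, sub_zero] at h
      calc ‖evalLM X x₀ x f‖ ≤ lipNorm X x₀ ℝ f * dist x x₀ := h
        _ = dist x x₀ * ‖f‖ := by rw [lip0_norm_def, mul_comm])

/-- The Lipschitz-free space `F(X)`: the closed linear span of the evaluation
functionals inside the dual of `Lip₀(X)`. -/
def freeSpace : Submodule ℝ (lip0 X x₀ ℝ →L[ℝ] ℝ) :=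
  (Submodule.span ℝ (Set.range (evalCLM X x₀))).topologicalClosure

/-- The Dirac map `δ : X → F(X)`. -/
def deltaF (x : X) : freeSpace X x₀ :=
  ⟨evalCLM X x₀ x,
    Submodule.le_topologicalClosure _ (Submodule.subset_span (Set.mem_range_self x))⟩

/-- For a normed space `G`, the topology on the dual `G'` of uniform convergence on the
convex balanced compact subsets of `G` (the topology of `G'_c`). -/
def dualcTop (G : Type*) [NormedAddCommGroup G] [NormedSpace ℝ G] :
    TopologicalSpace (G →L[ℝ] ℝ) :=
  TopologicalSpace.induced
    (fun φ => UniformOnFun.ofFun {L : Set G | IsCompact L ∧ Convex ℝ L ∧ Balanced ℝ L} ⇑φ)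
    inferInstance


/-! ### Auxiliary development -/

section AuxBasic

variable {X x₀}

lemma norm_le_iff {f : lip0 X x₀ ℝ} {r : ℝ} (hr : 0 ≤ r) :
    ‖f‖ ≤ r ↔ ∀ x y : X, |toFun' f x - toFun' f y| ≤ r * dist x y := by
  constructor
  · intro h x y
    calc |toFun' f x - toFun' f y| = ‖toFun' f x - toFun' f y‖ := rfl
      _ ≤ lipNorm X x₀ ℝ f * dist x y := norm_sub_le_lipNorm f x y
      _ ≤ r * dist x y := by
          exact mul_le_mul_of_nonneg_right h dist_nonneg
  · intro h
    haveI : Nonempty (X × X) := nonempty_pairs x₀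
    rw [lip0_norm_def, lipNorm]
    apply ciSup_le
    intro p
    rcases eq_or_ne p.1 p.2 with he | he
    · simp [he, hr]
    · rw [div_le_iff₀ (dist_pos.2 he)]
      exact h p.1 p.2

variable (X x₀) in
/-- The topology of pointwise convergence on `Lip₀(X)`. -/
def tp : TopologicalSpace (lip0 X x₀ ℝ) :=
  TopologicalSpace.induced toFun' inferInstance

lemma tp_inducing : @Topology.IsInducing _ _ (tp X x₀) _ (toFun' : lip0 X x₀ ℝ → X → ℝ) :=
  letI := tp X x₀
  ⟨rfl⟩

lemma toFun'_injective : Function.Injective (toFun' : lip0 X x₀ ℝ → X → ℝ) := by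
  intro f g h
  exact Subtype.ext h

lemma tp_continuous_eval (x : X) :
    @Continuous _ _ (tp X x₀) _ (fun f : lip0 X x₀ ℝ => toFun' f x) := by
  letI := tp X x₀
  exact (continuous_apply x).comp continuous_induced_dom

lemma tau0_le_tp : tau0 X x₀ ℝ ≤ tp X x₀ := by
  have h : @Continuous _ _ (tau0 X x₀ ℝ) _ (toFun' : lip0 X x₀ ℝ → X → ℝ) := by
    letI := tau0 X x₀ ℝ
    have h1 : @Continuous _ _ (tau0 X x₀ ℝ) ContinuousMap.compactOpen (toCM X x₀ ℝ) :=
      continuous_induced_dom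
    have h2 : @Continuous _ _ ContinuousMap.compactOpen _
        (fun g : C(X, ℝ) => (g : X → ℝ)) := continuous_coeFun
    exact h2.comp h1
  rw [tp]
  exact continuous_iff_le_induced.mp h

lemma tp_open_mem_tau0_nhds {s : Set (lip0 X x₀ ℝ)} (hs : IsOpen[tp X x₀] s)
    {f : lip0 X x₀ ℝ} (hf : f ∈ s) : s ∈ @nhds _ (tau0 X x₀ ℝ) f := by
  letI := tau0 X x₀ ℝ
  exact IsOpen.mem_nhds (tau0_le_tp _ hs) hf

lemma tp_isCompact_ball {r : ℝ} (hr : 0 ≤ r) :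
    @IsCompact _ (tp X x₀) {f : lip0 X x₀ ℝ | ‖f‖ ≤ r} := by
  letI := tp X x₀
  set A : Set (X → ℝ) :=
    {F | F x₀ = 0 ∧ ∀ x y : X, |F x - F y| ≤ r * dist x y} with hA
  have himage : toFun' '' {f : lip0 X x₀ ℝ | ‖f‖ ≤ r} = A := by
    apply Set.Subset.antisymm
    · rintro F ⟨f, hf, rfl⟩
      exact ⟨apply_base f, (norm_le_iff hr).1 hf⟩
    · rintro F ⟨hF0, hF⟩
      have hlip : LipschitzWith r.toNNReal F := by
        apply LipschitzWith.of_dist_le_mul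
        intro x y
        rw [Real.dist_eq]
        calc |F x - F y| ≤ r * dist x y := hF x y
          _ = (r.toNNReal : ℝ) * dist x y := by rw [Real.coe_toNNReal r hr]
      refine ⟨⟨F, ⟨r.toNNReal, hlip⟩, hF0⟩, ?_, rfl⟩
      exact (norm_le_iff hr).2 hF
  have hAc : IsCompact A := by
    have hsub : A ⊆ Set.pi Set.univ fun x : X =>
        Set.Icc (-(r * dist x x₀)) (r * dist x x₀) := by
      rintro F ⟨hF0, hF⟩ x _
      have := hF x x₀
      rw [hF0, sub_zero] at this
      exact abs_le.1 this
    have hclosed : IsClosed A := by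
      have : A = {F : X → ℝ | F x₀ = 0} ∩
          ⋂ (x : X) (y : X), {F : X → ℝ | |F x - F y| ≤ r * dist x y} := by
        ext F; simp [hA, Set.mem_iInter]
      rw [this]
      apply IsClosed.inter
      · exact isClosed_eq (continuous_apply x₀) continuous_const
      · apply isClosed_iInter; intro x; apply isClosed_iInter; intro y
        apply isClosed_le _ continuous_const
        exact ((continuous_apply x).sub (continuous_apply y)).abs
    exact (isCompact_univ_pi fun x => isCompact_Icc).of_isClosed_subset hclosed hsub
  rw [tp_inducing.isCompact_iff, himage]
  exact hAc

lemma tp_continuous_add :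
    @Continuous _ _ (@instTopologicalSpaceProd _ _ (tp X x₀) (tp X x₀)) (tp X x₀)
      (fun p : lip0 X x₀ ℝ × lip0 X x₀ ℝ => p.1 + p.2) := by
  letI := tp X x₀
  apply continuous_induced_rng.mpr
  have : (toFun' ∘ fun p : lip0 X x₀ ℝ × lip0 X x₀ ℝ => p.1 + p.2)
      = fun p : lip0 X x₀ ℝ × lip0 X x₀ ℝ => toFun' p.1 + toFun' p.2 := by
    funext p; exact toFun'_add _ _
  rw [this]
  exact (continuous_induced_dom.comp continuous_fst).add
    (continuous_induced_dom.comp continuous_snd)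

lemma tp_continuous_add_left (f : lip0 X x₀ ℝ) :
    @Continuous _ _ (tp X x₀) (tp X x₀) (fun g : lip0 X x₀ ℝ => f + g) := by
  letI := tp X x₀
  have : (fun g : lip0 X x₀ ℝ => f + g) =
      (fun p : lip0 X x₀ ℝ × lip0 X x₀ ℝ => p.1 + p.2) ∘ (fun g => (f, g)) := rfl
  rw [this]
  exact tp_continuous_add.comp (Continuous.prodMk continuous_const continuous_id)

lemma tp_continuous_span {μ : lip0 X x₀ ℝ →L[ℝ] ℝ}
    (hμ : μ ∈ Submodule.span ℝ (Set.range (evalCLM X x₀))) :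
    @Continuous _ _ (tp X x₀) _ (fun f : lip0 X x₀ ℝ => μ f) := by
  letI := tp X x₀
  induction hμ using Submodule.span_induction with
  | mem ν hν =>
      obtain ⟨x, rfl⟩ := hν
      exact tp_continuous_eval x
  | zero => simpa using (continuous_const : Continuous fun _ : lip0 X x₀ ℝ => (0 : ℝ))
  | add ν₁ ν₂ _ _ h1 h2 =>
      have : (fun f : lip0 X x₀ ℝ => (ν₁ + ν₂) f)
          = fun f => ν₁ f + ν₂ f := by funext f; simp
      rw [this]; exact h1.add h2
  | smul c ν _ h =>
      have : (fun f : lip0 X x₀ ℝ => (c • ν) f) = fun f => c * ν f := by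
        funext f; simp
      rw [this]; exact continuous_const.mul h

end AuxBasic

section AuxDual

variable {X x₀}

lemma evalCLM_apply (x : X) (f : lip0 X x₀ ℝ) : evalCLM X x₀ x f = toFun' f x := rfl

lemma norm_evalCLM_sub (x y : X) :
    ‖evalCLM X x₀ x - evalCLM X x₀ y‖ ≤ dist x y := by
  apply ContinuousLinearMap.opNorm_le_bound _ dist_nonneg
  intro f
  have : (evalCLM X x₀ x - evalCLM X x₀ y) f = toFun' f x - toFun' f y := rfl
  rw [this]
  calc ‖toFun' f x - toFun' f y‖ ≤ lipNorm X x₀ ℝ f * dist x y :=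
        norm_sub_le_lipNorm f x y
    _ = dist x y * ‖f‖ := by rw [lip0_norm_def, mul_comm]

lemma norm_le_inv_of_polar {f : lip0 X x₀ ℝ} {r : ℝ} (hr : 0 < r)
    (h : ∀ μ : lip0 X x₀ ℝ →L[ℝ] ℝ,
      μ ∈ Submodule.span ℝ (Set.range (evalCLM X x₀)) → ‖μ‖ ≤ r → |μ f| ≤ 1) :
    ‖f‖ ≤ r⁻¹ := by
  rw [norm_le_iff (by positivity)]
  intro x y
  rcases eq_or_ne x y with rfl | hxy
  · simp
  · have hd : (0 : ℝ) < dist x y := dist_pos.2 hxy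
    set μ : lip0 X x₀ ℝ →L[ℝ] ℝ :=
      (r / dist x y) • (evalCLM X x₀ x - evalCLM X x₀ y) with hμdef
    have hmem : μ ∈ Submodule.span ℝ (Set.range (evalCLM X x₀)) := by
      apply Submodule.smul_mem
      exact sub_mem (Submodule.subset_span (Set.mem_range_self x))
        (Submodule.subset_span (Set.mem_range_self y))
    have hnorm : ‖μ‖ ≤ r := by
      apply ContinuousLinearMap.opNorm_le_bound _ hr.le
      intro g
      have h1 : μ g = (r / dist x y) • ((evalCLM X x₀ x - evalCLM X x₀ y) g) := by
        rw [hμdef, ContinuousLinearMap.smul_apply]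
      rw [h1, norm_smul]
      have h2 : ‖(evalCLM X x₀ x - evalCLM X x₀ y) g‖ ≤ dist x y * ‖g‖ :=
        le_trans ((evalCLM X x₀ x - evalCLM X x₀ y).le_opNorm g)
          (mul_le_mul_of_nonneg_right (norm_evalCLM_sub x y) (norm_nonneg g))
      calc ‖r / dist x y‖ * ‖(evalCLM X x₀ x - evalCLM X x₀ y) g‖
          ≤ ‖r / dist x y‖ * (dist x y * ‖g‖) :=
            mul_le_mul_of_nonneg_left h2 (norm_nonneg _)
        _ = (r / dist x y) * (dist x y * ‖g‖) := by
            rw [Real.norm_eq_abs, abs_of_pos (by positivity)]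
        _ = r * ‖g‖ := by field_simp
    have happ : μ f = (r / dist x y) * (toFun' f x - toFun' f y) := by
      rw [hμdef, ContinuousLinearMap.smul_apply, ContinuousLinearMap.sub_apply]
      rw [evalCLM_apply, evalCLM_apply, smul_eq_mul]
    have h1 : |μ f| ≤ 1 := h μ hmem hnorm
    rw [happ, abs_mul, abs_of_pos (by positivity : (0:ℝ) < r / dist x y)] at h1
    rw [← le_div_iff₀' (by positivity : (0:ℝ) < r / dist x y)] at h1
    calc |toFun' f x - toFun' f y| ≤ 1 / (r / dist x y) := h1
      _ = r⁻¹ * dist x y := by field_simp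

lemma tau0_nhds_contains {U : Set (lip0 X x₀ ℝ)}
    (hU : U ∈ @nhds _ (tau0 X x₀ ℝ) 0) (c : ℝ) (hc : 0 < c) :
    ∃ (D : Finset X) (η : ℝ), 0 < η ∧
      {g : lip0 X x₀ ℝ | ∀ x ∈ D, |toFun' g x| ≤ η} ∩ {g | ‖g‖ ≤ c} ⊆ U := by
  letI := tau0 X x₀ ℝ
  rw [tau0, nhds_induced] at hU
  obtain ⟨W, hW, hWU⟩ := hU
  have hb := nhds_basis_uniformity' (x := toCM X x₀ ℝ 0)
    (ContinuousMap.hasBasis_compactConvergenceUniformity (α := X) (β := ℝ))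
  rw [hb.mem_iff] at hW
  obtain ⟨⟨K, V⟩, ⟨hK, hV⟩, hsub⟩ := hW
  obtain ⟨ε, hε, hεV⟩ := Metric.mem_uniformity_dist.mp hV
  obtain ⟨t, htK, htfin, htcov⟩ :=
    finite_cover_balls_of_compact hK (by positivity : (0:ℝ) < ε / 4 / c)
  refine ⟨htfin.toFinset, ε / 4, by positivity, ?_⟩
  rintro g ⟨hg1, hg2⟩
  apply hWU
  apply hsub
  intro y hy
  obtain ⟨x, hxt, hxy⟩ := Set.mem_iUnion₂.mp (htcov hy)
  have hgx : |toFun' g x| ≤ ε / 4 := hg1 x (htfin.mem_toFinset.mpr hxt)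
  have hdiff : |toFun' g y - toFun' g x| ≤ c * dist y x :=
    (norm_le_iff hc.le).1 hg2 y x
  have hgy : |toFun' g y| < ε := by
    have hdyx : dist y x < ε / 4 / c := Metric.mem_ball.mp hxy
    have h2 : c * dist y x ≤ ε / 4 := by
      calc c * dist y x ≤ c * (ε / 4 / c) :=
            mul_le_mul_of_nonneg_left hdyx.le hc.le
        _ = ε / 4 := by field_simp
    calc |toFun' g y| ≤ |toFun' g y - toFun' g x| + |toFun' g x| := by
          simpa using abs_add_le (toFun' g y - toFun' g x) (toFun' g x)
      _ ≤ c * dist y x + ε / 4 := add_le_add hdiff hgx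
      _ ≤ ε / 4 + ε / 4 := by linarith
      _ < ε := by linarith
  apply hεV
  have h0 : (toCM X x₀ ℝ (0 : lip0 X x₀ ℝ)) y = 0 := by
    simp [toCM, toFun'_zero]
  simp only [h0]
  rw [Real.dist_eq]
  simpa [toCM] using hgy

end AuxDual

section AuxHull

variable {G : Type*} [NormedAddCommGroup G] [NormedSpace ℝ G]

lemma isCompact_balancedHull {K : Set G} (hK : IsCompact K) :
    IsCompact (balancedHull ℝ K) := by
  have himg : balancedHull ℝ K
      = (fun p : ℝ × G => p.1 • p.2) '' (Metric.closedBall (0:ℝ) 1 ×ˢ K) := by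
    ext z
    rw [mem_balancedHull_iff]
    constructor
    · rintro ⟨r, hr, hz⟩
      obtain ⟨y, hy, rfl⟩ := hz
      exact ⟨(r, y), ⟨mem_closedBall_zero_iff.mpr hr, hy⟩, rfl⟩
    · rintro ⟨⟨r, y⟩, ⟨hr, hy⟩, rfl⟩
      exact ⟨r, mem_closedBall_zero_iff.mp hr, Set.smul_mem_smul_set hy⟩
  rw [himg]
  exact ((isCompact_closedBall (0:ℝ) 1).prod hK).image
    (continuous_fst.smul continuous_snd)

/-- The closed convex balanced hull of a compact set in a Banach space is compact,
convex and balanced. -/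
lemma cch_spec [CompleteSpace G] {K : Set G} (hK : IsCompact K) :
    IsCompact (closure (convexHull ℝ (balancedHull ℝ K))) ∧
    Convex ℝ (closure (convexHull ℝ (balancedHull ℝ K))) ∧
    Balanced ℝ (closure (convexHull ℝ (balancedHull ℝ K))) ∧
    K ⊆ closure (convexHull ℝ (balancedHull ℝ K)) := by
  have htb : TotallyBounded (convexHull ℝ (balancedHull ℝ K)) :=
    totallyBounded_convexHull.2 (isCompact_balancedHull hK).totallyBounded
  refine ⟨?_, ?_, ?_, ?_⟩
  · exact TotallyBounded.isCompact_of_isClosed htb.closure isClosed_closure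
  · exact (convex_convexHull ℝ _).closure
  · exact ((balancedHull.balanced _).convexHull).closure
  · exact (subset_balancedHull ℝ).trans
      ((subset_convexHull ℝ _).trans subset_closure)

lemma dualc_family_nonempty :
    Set.Nonempty {L : Set G | IsCompact L ∧ Convex ℝ L ∧ Balanced ℝ L} :=
  ⟨∅, isCompact_empty, convex_empty, balanced_empty⟩

lemma dualc_family_directed [CompleteSpace G] :
    DirectedOn (· ⊆ ·) {L : Set G | IsCompact L ∧ Convex ℝ L ∧ Balanced ℝ L} := by
  rintro L₁ ⟨h1, _, _⟩ L₂ ⟨h2, _, _⟩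
  obtain ⟨hc, hconv, hbal, hsub⟩ := cch_spec (h1.union h2)
  exact ⟨_, ⟨hc, hconv, hbal⟩,
    (Set.subset_union_left.trans hsub), (Set.subset_union_right.trans hsub)⟩

end AuxHull

section AuxFree

variable {X x₀}

instance : CompleteSpace ↥(freeSpace X x₀) :=
  IsClosed.completeSpace_coe (hs := Submodule.isClosed_topologicalClosure _)

/-- The seminormed group structure of `F(X)`, as a local instance. -/
abbrev freeSpaceSNACG : SeminormedAddCommGroup ↥(freeSpace X x₀) := inferInstance

/-- The normed space structure of `F(X)`, as a local instance. -/
abbrev freeSpaceNS : NormedSpace ℝ ↥(freeSpace X x₀) := inferInstance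

end AuxFree

section AuxEquiv

variable {X x₀}

lemma deltaF_val (x : X) :
    ((deltaF X x₀ x : ↥(freeSpace X x₀)) : lip0 X x₀ ℝ →L[ℝ] ℝ) = evalCLM X x₀ x := rfl

lemma evalCLM_base : evalCLM X x₀ x₀ = 0 := by
  ext f
  simp only [ContinuousLinearMap.zero_apply]
  exact apply_base f

lemma deltaF_base : deltaF X x₀ x₀ = 0 := by
  apply Subtype.ext
  rw [deltaF_val, evalCLM_base]
  rfl

variable (X x₀) in
/-- The evaluation map `Lip₀(X) → F(X)'`, as a linear map. -/
def eval2L : lip0 X x₀ ℝ →ₗ[ℝ] (↥(freeSpace X x₀) →L[ℝ] ℝ) where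
  toFun f := LinearMap.mkContinuous
    { toFun := fun φ : ↥(freeSpace X x₀) => φ.1 f
      map_add' := fun φ ψ => rfl
      map_smul' := fun c φ => rfl } ‖f‖
    (fun φ => by
      calc ‖φ.1 f‖ ≤ ‖φ.1‖ * ‖f‖ := φ.1.le_opNorm f
        _ = ‖f‖ * ‖φ‖ := by rw [mul_comm]; rfl)
  map_add' f g := by
    ext φ
    simp [LinearMap.mkContinuous_apply]
  map_smul' c f := by
    ext φ
    simp [LinearMap.mkContinuous_apply]

lemma eval2L_apply (f : lip0 X x₀ ℝ) (φ : ↥(freeSpace X x₀)) :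
    eval2L X x₀ f φ = φ.1 f := rfl

attribute [local instance] freeSpaceSNACG freeSpaceNS

variable (X x₀) in
/-- The inverse evaluation map `F(X)' → Lip₀(X)`. -/
def invE (T : ↥(freeSpace X x₀) →L[ℝ] ℝ) : lip0 X x₀ ℝ :=
  ⟨fun x => T (deltaF X x₀ x),
    ⟨‖T‖₊, by
      apply LipschitzWith.of_dist_le_mul
      intro x y
      rw [Real.dist_eq, ← map_sub]
      have h1 : |T (deltaF X x₀ x - deltaF X x₀ y)| ≤
          ‖T‖ * ‖deltaF X x₀ x - deltaF X x₀ y‖ :=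
        T.le_opNorm _
      have h2 : ‖deltaF X x₀ x - deltaF X x₀ y‖ ≤ dist x y := by
        have : ((deltaF X x₀ x - deltaF X x₀ y : ↥(freeSpace X x₀)) :
            lip0 X x₀ ℝ →L[ℝ] ℝ) = evalCLM X x₀ x - evalCLM X x₀ y := rfl
        calc ‖deltaF X x₀ x - deltaF X x₀ y‖
            = ‖evalCLM X x₀ x - evalCLM X x₀ y‖ := by rw [← this]; rfl
          _ ≤ dist x y := norm_evalCLM_sub x y
      calc |T (deltaF X x₀ x - deltaF X x₀ y)|
          ≤ ‖T‖ * ‖deltaF X x₀ x - deltaF X x₀ y‖ := h1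
        _ ≤ ‖T‖ * dist x y := mul_le_mul_of_nonneg_left h2 (norm_nonneg T)
        _ = (‖T‖₊ : ℝ) * dist x y := rfl⟩,
    by show T (deltaF X x₀ x₀) = 0; rw [deltaF_base]; exact map_zero T⟩

lemma invE_toFun' (T : ↥(freeSpace X x₀) →L[ℝ] ℝ) (x : X) :
    toFun' (invE X x₀ T) x = T (deltaF X x₀ x) := rfl

lemma dense_span_deltaF :
    Dense ((Submodule.span ℝ (Set.range (deltaF X x₀)) : Submodule ℝ ↥(freeSpace X x₀)) :
      Set ↥(freeSpace X x₀)) := by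
  intro φ
  have hval : Subtype.val '' ((Submodule.span ℝ (Set.range (deltaF X x₀)) :
      Submodule ℝ ↥(freeSpace X x₀)) : Set ↥(freeSpace X x₀))
      = (Submodule.span ℝ (Set.range (evalCLM X x₀)) : Set (lip0 X x₀ ℝ →L[ℝ] ℝ)) := by
    have h1 : (Submodule.span ℝ (Set.range (deltaF X x₀))).map
        (freeSpace X x₀).subtype = Submodule.span ℝ (Set.range (evalCLM X x₀)) := by
      rw [Submodule.map_span]
      congr 1
      ext μ
      constructor
      · rintro ⟨ψ, ⟨x, rfl⟩, rfl⟩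
        exact ⟨x, rfl⟩
      · rintro ⟨x, rfl⟩
        exact ⟨deltaF X x₀ x, ⟨x, rfl⟩, rfl⟩
    rw [← h1]
    rfl
  rw [closure_subtype, hval]
  have hφ : (φ : lip0 X x₀ ℝ →L[ℝ] ℝ) ∈ (freeSpace X x₀ : Set (lip0 X x₀ ℝ →L[ℝ] ℝ)) := φ.2
  have : (freeSpace X x₀ : Set (lip0 X x₀ ℝ →L[ℝ] ℝ))
      = closure ((Submodule.span ℝ (Set.range (evalCLM X x₀)) :
          Submodule ℝ (lip0 X x₀ ℝ →L[ℝ] ℝ)) : Set (lip0 X x₀ ℝ →L[ℝ] ℝ)) := by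
    rw [freeSpace, Submodule.topologicalClosure_coe]
  rwa [this] at hφ

lemma right_inv_eval2 (T : ↥(freeSpace X x₀) →L[ℝ] ℝ) : eval2L X x₀ (invE X x₀ T) = T := by
  have hagree : Set.EqOn (⇑(eval2L X x₀ (invE X x₀ T))) (⇑T)
      ((Submodule.span ℝ (Set.range (deltaF X x₀)) : Submodule ℝ ↥(freeSpace X x₀)) :
        Set ↥(freeSpace X x₀)) := by
    intro φ hφ
    induction hφ using Submodule.span_induction with
    | mem ψ hψ =>
        obtain ⟨x, rfl⟩ := hψ
        rw [eval2L_apply, deltaF_val]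
        exact (invE_toFun' T x).symm ▸ rfl
    | zero => simp
    | add ψ₁ ψ₂ _ _ h1 h2 => simp [h1, h2]
    | smul c ψ _ h => simp [h]
  have := Continuous.ext_on dense_span_deltaF
    (eval2L X x₀ (invE X x₀ T)).continuous T.continuous hagree
  exact ContinuousLinearMap.coeFn_injective this

lemma left_inv_eval2 (f : lip0 X x₀ ℝ) : invE X x₀ (eval2L X x₀ f) = f := by
  apply Subtype.ext
  funext x
  rfl

variable (X x₀) in
/-- The evaluation map as a linear equivalence `Lip₀(X) ≃ F(X)'`. -/
def eEquiv : lip0 X x₀ ℝ ≃ₗ[ℝ] (↥(freeSpace X x₀) →L[ℝ] ℝ) :=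
  { eval2L X x₀ with
    invFun := invE X x₀
    left_inv := left_inv_eval2
    right_inv := right_inv_eval2 }

lemma eEquiv_apply (f : lip0 X x₀ ℝ) (φ : ↥(freeSpace X x₀)) :
    eEquiv X x₀ f φ = φ.1 f := rfl

lemma eEquiv_symm_apply (T : ↥(freeSpace X x₀) →L[ℝ] ℝ) :
    (eEquiv X x₀).symm T = invE X x₀ T := rfl

end AuxEquiv

section AuxGamma

variable {X x₀}

lemma sum_sets_mono {A B : ℕ → Set (lip0 X x₀ ℝ)} (h : ∀ i, A i ⊆ B i) (n : ℕ) :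
    ∑ i ∈ Finset.range n, A i ⊆ ∑ i ∈ Finset.range n, B i := by
  induction n with
  | zero => simp
  | succ n ih =>
      rw [Finset.sum_range_succ, Finset.sum_range_succ]
      exact Set.add_subset_add ih (h n)

lemma mem_sum_sets {A : ℕ → Set (lip0 X x₀ ℝ)} {g : ℕ → lip0 X x₀ ℝ} (n : ℕ)
    (h : ∀ i ∈ Finset.range n, g i ∈ A i) :
    (∑ i ∈ Finset.range n, g i) ∈ ∑ i ∈ Finset.range n, A i := by
  induction n with
  | zero => simp [Set.mem_zero]
  | succ n ih =>
      rw [Finset.sum_range_succ, Finset.sum_range_succ]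
      exact Set.add_mem_add (ih fun i hi => h i (Finset.mem_range.2
        ((Finset.mem_range.1 hi).trans (Nat.lt_succ_self n))))
        (h n (Finset.self_mem_range_succ n))

lemma sum_sets_decompose {A : ℕ → Set (lip0 X x₀ ℝ)} :
    ∀ n, ∀ x ∈ (∑ i ∈ Finset.range n, A i),
      ∃ g : ℕ → lip0 X x₀ ℝ, (∀ i ∈ Finset.range n, g i ∈ A i) ∧
        x = ∑ i ∈ Finset.range n, g i := by
  classical
  intro n
  induction n with
  | zero =>
      intro x hx
      rw [Finset.range_zero, Finset.sum_empty] at hx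
      refine ⟨fun _ => 0, by simp, ?_⟩
      rw [Finset.range_zero, Finset.sum_empty]
      exact Set.mem_zero.mp hx
  | succ n ih =>
      intro x hx
      rw [Finset.sum_range_succ] at hx
      obtain ⟨a, ha, b, hb, rfl⟩ := Set.mem_add.mp hx
      obtain ⟨g, hg, rfl⟩ := ih a ha
      refine ⟨Function.update g n b, ?_, ?_⟩
      · intro i hi
        rcases Nat.lt_or_eq_of_le (Finset.mem_range_succ_iff.mp hi) with hlt | heq
        · rw [Function.update_of_ne hlt.ne]
          exact hg i (Finset.mem_range.2 hlt)
        · subst heq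
          rw [Function.update_self]
          exact hb
      · rw [Finset.sum_range_succ, Function.update_self]
        congr 1
        apply Finset.sum_congr rfl
        intro i hi
        rw [Function.update_of_ne (Finset.mem_range.1 hi).ne]

lemma zero_mem_of_nhds {U : Set (lip0 X x₀ ℝ)} (hU : U ∈ @nhds _ (tau0 X x₀ ℝ) 0) :
    (0 : lip0 X x₀ ℝ) ∈ U := by
  letI := tau0 X x₀ ℝ
  exact mem_of_mem_nhds hU

variable (X x₀) in
/-- The condition on the sequences of neighborhoods defining the mixed topology. -/
def condU (U : ℕ → Set (lip0 X x₀ ℝ)) : Prop :=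
  ∀ n, U n ∈ @nhds _ (tau0 X x₀ ℝ) 0 ∧ Convex ℝ (U n) ∧ Balanced ℝ (U n)

lemma condU_univ : condU X x₀ (fun _ => Set.univ) := by
  intro n
  exact ⟨Filter.univ_mem, convex_univ, balanced_univ⟩

lemma condU_inter {U V : ℕ → Set (lip0 X x₀ ℝ)} (hU : condU X x₀ U) (hV : condU X x₀ V) :
    condU X x₀ (fun n => U n ∩ V n) := by
  intro n
  exact ⟨Filter.inter_mem (hU n).1 (hV n).1, (hU n).2.1.inter (hV n).2.1,
    (hU n).2.2.inter (hV n).2.2⟩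

lemma gammaSet_mono {U V : ℕ → Set (lip0 X x₀ ℝ)} (h : ∀ n, V n ⊆ U n) :
    gammaSet X x₀ ℝ V ⊆ gammaSet X x₀ ℝ U := by
  apply Set.iUnion_mono
  intro n
  exact sum_sets_mono (fun i => Set.inter_subset_inter_left _ (h i)) _

lemma mem_tauGamma_nhds_iff {f : lip0 X x₀ ℝ} {s : Set (lip0 X x₀ ℝ)} :
    (s ∈ ⨅ (U : ℕ → Set (lip0 X x₀ ℝ))
      (_ : ∀ n, U n ∈ @nhds _ (tau0 X x₀ ℝ) 0 ∧ Convex ℝ (U n) ∧ Balanced ℝ (U n)),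
      Filter.principal ((f + ·) '' gammaSet X x₀ ℝ U))
    ↔ ∃ U, condU X x₀ U ∧ (f + ·) '' gammaSet X x₀ ℝ U ⊆ s := by
  rw [iInf_subtype']
  haveI : Nonempty {U : ℕ → Set (lip0 X x₀ ℝ) //
      ∀ n, U n ∈ @nhds _ (tau0 X x₀ ℝ) 0 ∧ Convex ℝ (U n) ∧ Balanced ℝ (U n)} :=
    ⟨⟨fun _ => Set.univ, condU_univ⟩⟩
  rw [Filter.mem_iInf_of_directed]
  · constructor
    · rintro ⟨⟨U, hU⟩, hs⟩
      exact ⟨U, hU, Filter.mem_principal.mp hs⟩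
    · rintro ⟨U, hU, hs⟩
      exact ⟨⟨U, hU⟩, Filter.mem_principal.mpr hs⟩
  · rintro ⟨U, hU⟩ ⟨V, hV⟩
    refine ⟨⟨fun n => U n ∩ V n, condU_inter hU hV⟩, ?_, ?_⟩
    · apply Filter.principal_mono.mpr
      exact Set.image_mono (gammaSet_mono fun n => Set.inter_subset_left)
    · apply Filter.principal_mono.mpr
      exact Set.image_mono (gammaSet_mono fun n => Set.inter_subset_right)

lemma isOpen_tauGamma_iff {s : Set (lip0 X x₀ ℝ)} :
    IsOpen[tauGamma X x₀ ℝ] s ↔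
      ∀ f ∈ s, ∃ U, condU X x₀ U ∧ (f + ·) '' gammaSet X x₀ ℝ U ⊆ s := by
  constructor
  · intro h f hf
    exact mem_tauGamma_nhds_iff.mp (h f hf)
  · intro h f hf
    exact mem_tauGamma_nhds_iff.mpr (h f hf)

end AuxGamma

section AuxEasy

variable {X x₀}

lemma freeSpace_coe_closure (φ : ↥(freeSpace X x₀)) :
    (φ : lip0 X x₀ ℝ →L[ℝ] ℝ) ∈
      closure ((Submodule.span ℝ (Set.range (evalCLM X x₀)) :
        Submodule ℝ (lip0 X x₀ ℝ →L[ℝ] ℝ)) : Set (lip0 X x₀ ℝ →L[ℝ] ℝ)) := by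
  have hφ : (φ : lip0 X x₀ ℝ →L[ℝ] ℝ) ∈ (freeSpace X x₀ :
      Set (lip0 X x₀ ℝ →L[ℝ] ℝ)) := φ.2
  have h : (freeSpace X x₀ : Set (lip0 X x₀ ℝ →L[ℝ] ℝ))
      = closure ((Submodule.span ℝ (Set.range (evalCLM X x₀)) :
          Submodule ℝ (lip0 X x₀ ℝ →L[ℝ] ℝ)) : Set (lip0 X x₀ ℝ →L[ℝ] ℝ)) := by
    rw [freeSpace, Submodule.topologicalClosure_coe]
  rwa [h] at hφ

lemma exists_span_approx (φ : ↥(freeSpace X x₀)) {δ : ℝ} (hδ : 0 < δ) :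
    ∃ ν : lip0 X x₀ ℝ →L[ℝ] ℝ, ν ∈ Submodule.span ℝ (Set.range (evalCLM X x₀)) ∧
      ‖(φ : lip0 X x₀ ℝ →L[ℝ] ℝ) - ν‖ < δ := by
  have := Metric.mem_closure_iff.mp (freeSpace_coe_closure φ) δ hδ
  obtain ⟨ν, hν, hd⟩ := this
  exact ⟨ν, hν, by rwa [dist_eq_norm] at hd⟩

lemma absLt_convex (ν : lip0 X x₀ ℝ →L[ℝ] ℝ) (c : ℝ) :
    Convex ℝ {g : lip0 X x₀ ℝ | |ν g| < c} := by
  have h : {g : lip0 X x₀ ℝ | |ν g| < c} = ⇑ν ⁻¹' Metric.ball (0 : ℝ) c := by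
    ext g
    simp [Real.dist_eq, abs_sub_comm]
  rw [h]
  exact (convex_ball (0:ℝ) c).linear_preimage (ν : lip0 X x₀ ℝ →ₗ[ℝ] ℝ)

lemma absLt_balanced (ν : lip0 X x₀ ℝ →L[ℝ] ℝ) (c : ℝ) :
    Balanced ℝ {g : lip0 X x₀ ℝ | |ν g| < c} := by
  intro a ha
  rintro _ ⟨g, hg, rfl⟩
  simp only [Set.mem_setOf_eq] at hg ⊢
  rw [map_smul, smul_eq_mul, abs_mul]
  calc |a| * |ν g| ≤ 1 * |ν g| :=
        mul_le_mul_of_nonneg_right (by simpa using ha) (abs_nonneg _)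
    _ = |ν g| := one_mul _
    _ < c := hg

lemma easy_step {L : Set ↥(freeSpace X x₀)} (hL : IsCompact L) {κ c : ℝ}
    (hκ : 0 < κ) (hc : 0 < c) :
    ∃ Ui : Set (lip0 X x₀ ℝ),
      (Ui ∈ @nhds _ (tau0 X x₀ ℝ) 0 ∧ Convex ℝ Ui ∧ Balanced ℝ Ui) ∧
      ∀ g ∈ Ui, ‖g‖ ≤ c → ∀ φ ∈ L, |(φ : lip0 X x₀ ℝ →L[ℝ] ℝ) g| ≤ κ := by
  classical
  set δ : ℝ := κ * c⁻¹ / 4 with hδdef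
  have hδ : 0 < δ := by positivity
  obtain ⟨t, htfin, htcov⟩ := Metric.totallyBounded_iff.mp hL.totallyBounded δ hδ
  haveI : Finite {y : ↥(freeSpace X x₀) // y ∈ t} := htfin.to_subtype
  choose νf hνf using fun (y : {y : ↥(freeSpace X x₀) // y ∈ t}) =>
    exists_span_approx y.1 hδ
  refine ⟨⋂ (y : {y : ↥(freeSpace X x₀) // y ∈ t}), {g | |νf y g| < κ / 2},
    ⟨?_, ?_, ?_⟩, ?_⟩
  · -- τ₀-neighborhood of 0
    apply tp_open_mem_tau0_nhds
    · letI := tp X x₀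
      apply isOpen_iInter_of_finite
      intro y
      have hcont : Continuous fun g : lip0 X x₀ ℝ => νf y g :=
        tp_continuous_span (hνf y).1
      exact isOpen_lt hcont.abs continuous_const
    · simp only [Set.mem_iInter, Set.mem_setOf_eq]
      intro y
      simp only [map_zero, abs_zero]
      positivity
  · exact convex_iInter fun y => absLt_convex _ _
  · exact balanced_iInter fun y => absLt_balanced _ _
  · intro g hg hgnorm φ hφ
    obtain ⟨y, hyt, hdy⟩ := Set.mem_iUnion₂.mp (htcov hφ)
    have hg' : |νf ⟨y, hyt⟩ g| < κ / 2 := Set.mem_iInter.mp hg ⟨y, hyt⟩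
    have hdist : ‖(φ : lip0 X x₀ ℝ →L[ℝ] ℝ) - νf ⟨y, hyt⟩‖ ≤ 2 * δ := by
      calc ‖(φ : lip0 X x₀ ℝ →L[ℝ] ℝ) - νf ⟨y, hyt⟩‖
          ≤ ‖(φ : lip0 X x₀ ℝ →L[ℝ] ℝ) - (y : lip0 X x₀ ℝ →L[ℝ] ℝ)‖ +
            ‖(y : lip0 X x₀ ℝ →L[ℝ] ℝ) - νf ⟨y, hyt⟩‖ := by
            simpa using norm_sub_le_norm_sub_add_norm_sub
              (φ : lip0 X x₀ ℝ →L[ℝ] ℝ) (y : lip0 X x₀ ℝ →L[ℝ] ℝ) (νf ⟨y, hyt⟩)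
        _ ≤ δ + δ := by
            apply add_le_add
            · have : dist φ y < δ := Metric.mem_ball.mp hdy
              rw [Subtype.dist_eq, dist_eq_norm] at this
              exact this.le
            · exact (hνf ⟨y, hyt⟩).2.le
        _ = 2 * δ := by ring
    calc |(φ : lip0 X x₀ ℝ →L[ℝ] ℝ) g|
        ≤ |νf ⟨y, hyt⟩ g| + |((φ : lip0 X x₀ ℝ →L[ℝ] ℝ) - νf ⟨y, hyt⟩) g| := by
          have : (φ : lip0 X x₀ ℝ →L[ℝ] ℝ) g
              = νf ⟨y, hyt⟩ g + ((φ : lip0 X x₀ ℝ →L[ℝ] ℝ) - νf ⟨y, hyt⟩) g := by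
            simp
          rw [this]
          exact abs_add_le _ _
      _ ≤ κ / 2 + ‖(φ : lip0 X x₀ ℝ →L[ℝ] ℝ) - νf ⟨y, hyt⟩‖ * ‖g‖ :=
          add_le_add hg'.le (((φ : lip0 X x₀ ℝ →L[ℝ] ℝ) - νf ⟨y, hyt⟩).le_opNorm g)
      _ ≤ κ / 2 + (2 * δ) * c := by
          apply add_le_add_right
          apply mul_le_mul hdist hgnorm (norm_nonneg g) (by positivity)
      _ ≤ κ := by
          rw [hδdef]
          have : 2 * (κ * c⁻¹ / 4) * c = κ / 2 := by field_simp; ring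
          rw [this]
          linarith

lemma easy_core {L : Set ↥(freeSpace X x₀)} (hL : IsCompact L) {ε : ℝ} (hε : 0 < ε) :
    ∃ U : ℕ → Set (lip0 X x₀ ℝ), condU X x₀ U ∧
      ∀ g ∈ gammaSet X x₀ ℝ U, ∀ φ ∈ L,
        |(φ : lip0 X x₀ ℝ →L[ℝ] ℝ) g| < ε := by
  have hκ : ∀ i : ℕ, (0:ℝ) < ε / 4 * (1/2)^i := by
    intro i; positivity
  choose U hUprop hUbound using fun i : ℕ =>
    easy_step hL (hκ i) (pow_pos (two_pos) i : (0:ℝ) < 2 ^ i)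
  refine ⟨U, hUprop, ?_⟩
  intro g hg φ hφ
  obtain ⟨n, hn⟩ := Set.mem_iUnion.mp hg
  obtain ⟨gf, hgf, rfl⟩ := sum_sets_decompose _ _ hn
  calc |(φ : lip0 X x₀ ℝ →L[ℝ] ℝ) (∑ i ∈ Finset.range (n+1), gf i)|
      = |∑ i ∈ Finset.range (n+1), (φ : lip0 X x₀ ℝ →L[ℝ] ℝ) (gf i)| := by
        rw [map_sum]
    _ ≤ ∑ i ∈ Finset.range (n+1), |(φ : lip0 X x₀ ℝ →L[ℝ] ℝ) (gf i)| :=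
        Finset.abs_sum_le_sum_abs _ _
    _ ≤ ∑ i ∈ Finset.range (n+1), ε / 4 * (1/2)^i := by
        apply Finset.sum_le_sum
        intro i hi
        have hmem := hgf i hi
        exact hUbound i (gf i) hmem.1 hmem.2 φ hφ
    _ = ε / 4 * ∑ i ∈ Finset.range (n+1), (1/2 : ℝ)^i := by
        rw [Finset.mul_sum]
    _ ≤ ε / 4 * 2 := by
        apply mul_le_mul_of_nonneg_left (sum_geometric_two_le _) (by positivity)
    _ < ε := by linarith

end AuxEasy

section AuxFIP

variable {X x₀}

lemma tp_t2 : @T2Space _ (tp X x₀) := by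
  letI := tp X x₀
  have hemb : Topology.IsEmbedding (toFun' : lip0 X x₀ ℝ → X → ℝ) :=
    ⟨tp_inducing, toFun'_injective⟩
  exact hemb.t2Space

lemma fip_polar {Q : Set (lip0 X x₀ ℝ)} (hQcl : IsClosed[tp X x₀] Q)
    {b r : ℝ} (hb : 0 < b) (hr : 0 < r)
    {R : Set (lip0 X x₀ ℝ)} (hRopen : IsOpen[tp X x₀] R)
    (hmain : ∀ f, ‖f‖ ≤ r⁻¹ → f ∈ Q → f ∈ R) :
    ∃ C : Finset (lip0 X x₀ ℝ →L[ℝ] ℝ),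
      (∀ μ ∈ C, μ ∈ Submodule.span ℝ (Set.range (evalCLM X x₀)) ∧ ‖μ‖ ≤ r) ∧
      ∀ f ∈ Q, (∀ μ ∈ C, |μ f| ≤ 1) → ‖f‖ ≤ b → f ∈ R := by
  classical
  by_contra hcon
  push_neg at hcon
  set Y := {μ : lip0 X x₀ ℝ →L[ℝ] ℝ //
    μ ∈ Submodule.span ℝ (Set.range (evalCLM X x₀)) ∧ ‖μ‖ ≤ r} with hY
  set T : Finset Y → Set (lip0 X x₀ ℝ) := fun C =>
    Q ∩ {f | ∀ μ : Y, μ ∈ C → |μ.1 f| ≤ 1} ∩ {f | ‖f‖ ≤ b} ∩ Rᶜ with hT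
  letI := tp X x₀
  haveI : T2Space (lip0 X x₀ ℝ) := tp_t2
  have hTclosed : ∀ C, IsClosed (T C) := by
    intro C
    apply IsClosed.inter
    apply IsClosed.inter
    apply IsClosed.inter
    · exact hQcl
    · have : {f : lip0 X x₀ ℝ | ∀ μ : Y, μ ∈ C → |μ.1 f| ≤ 1}
          = ⋂ (μ : Y) (_ : μ ∈ C), {f | |μ.1 f| ≤ 1} := by
        ext f; simp
      rw [this]
      apply isClosed_iInter; intro μ; apply isClosed_iInter; intro _
      exact isClosed_le (tp_continuous_span μ.2.1).abs continuous_const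
    · exact (tp_isCompact_ball hb.le).isClosed
    · exact hRopen.isClosed_compl
  have hTcompact : ∀ C, IsCompact (T C) := by
    intro C
    apply (tp_isCompact_ball hb.le).of_isClosed_subset (hTclosed C)
    intro f hf
    exact hf.1.2
  have hTnonempty : ∀ C, (T C).Nonempty := by
    intro C
    obtain ⟨f, hfQ, hfpolar, hfb, hfR⟩ := hcon (C.image Subtype.val)
      (by
        intro μ hμ
        obtain ⟨y, _, rfl⟩ := Finset.mem_image.mp hμ
        exact y.2)
    refine ⟨f, ⟨⟨⟨hfQ, ?_⟩, hfb⟩, hfR⟩⟩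
    intro μ hμ
    exact hfpolar μ.1 (Finset.mem_image_of_mem _ hμ)
  have hTdir : Directed (· ⊇ ·) T := by
    intro C₁ C₂
    refine ⟨C₁ ∪ C₂, ?_, ?_⟩
    · intro f hf
      exact ⟨⟨⟨hf.1.1.1, fun μ hμ => hf.1.1.2 μ (Finset.mem_union_left _ hμ)⟩,
        hf.1.2⟩, hf.2⟩
    · intro f hf
      exact ⟨⟨⟨hf.1.1.1, fun μ hμ => hf.1.1.2 μ (Finset.mem_union_right _ hμ)⟩,
        hf.1.2⟩, hf.2⟩
  haveI : Nonempty (Finset Y) := ⟨∅⟩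
  obtain ⟨f, hf⟩ := IsCompact.nonempty_iInter_of_directed_nonempty_isCompact_isClosed
    T hTdir hTnonempty hTcompact hTclosed
  have hfC : ∀ C, f ∈ T C := Set.mem_iInter.mp hf
  have hfQ : f ∈ Q := (hfC ∅).1.1.1
  have hfR : f ∉ R := (hfC ∅).2
  have hfnorm : ‖f‖ ≤ r⁻¹ := by
    apply norm_le_inv_of_polar hr
    intro μ hμ hμn
    exact (hfC {⟨μ, hμ, hμn⟩}).1.1.2 ⟨μ, hμ, hμn⟩ (Finset.mem_singleton_self _)
  exact hfR (hmain f hfnorm hfQ)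

end AuxFIP

section AuxHard

variable {X x₀}

lemma sum_pow_two_le : ∀ k : ℕ, ∑ i ∈ Finset.range k, (2:ℝ)^i ≤ 2^k := by
  intro k
  induction k with
  | zero => simp
  | succ k ih =>
      rw [Finset.sum_range_succ, pow_succ]
      nlinarith [pow_pos (show (0:ℝ) < 2 by norm_num) k]

lemma tp_open_add {A T : Set (lip0 X x₀ ℝ)} (hT : IsOpen[tp X x₀] T) :
    IsOpen[tp X x₀] (A + T) := by
  letI := tp X x₀
  have h : A + T = ⋃ a ∈ A, (fun y => -a + y) ⁻¹' T := by
    ext y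
    simp only [Set.mem_add, Set.mem_iUnion, Set.mem_preimage]
    constructor
    · rintro ⟨a, ha, b, hb, rfl⟩
      exact ⟨a, ha, by simpa using hb⟩
    · rintro ⟨a, ha, hb⟩
      exact ⟨a, ha, -a + y, hb, by abel⟩
  rw [h]
  exact isOpen_biUnion fun a _ => (tp_continuous_add_left (-a)).isOpen_preimage T hT

set_option maxHeartbeats 1000000 in
lemma hard_core {U : ℕ → Set (lip0 X x₀ ℝ)} (hU : condU X x₀ U) :
    ∃ L : Set ↥(freeSpace X x₀), IsCompact L ∧ Convex ℝ L ∧ Balanced ℝ L ∧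
      ∀ g : lip0 X x₀ ℝ, (∀ φ ∈ L, |(φ : lip0 X x₀ ℝ →L[ℝ] ℝ) g| ≤ 1) →
        g ∈ gammaSet X x₀ ℝ U := by
  classical
  -- Step 1: finite polar neighborhoods inside the `U i`
  choose D' η' hη'pos hsub' using fun i : ℕ =>
    tau0_nhds_contains (hU i).1 ((2:ℝ)^i) (pow_pos two_pos i)
  set Dc : ℕ → Finset X := fun i => (Finset.range (i+1)).biUnion D' with hDcdef
  set ηc : ℕ → ℝ := fun i =>
    (Finset.range (i+1)).inf' Finset.nonempty_range_add_one η' with hηcdef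
  have hηcpos : ∀ i, 0 < ηc i := by
    intro i
    rw [hηcdef]
    rw [Finset.lt_inf'_iff]
    intro j _
    exact hη'pos j
  have hηcmono : ∀ i j, i ≤ j → ηc j ≤ ηc i := by
    intro i j hij
    apply Finset.inf'_mono
    exact Finset.range_subset_range.mpr (by omega)
  have hηcle : ∀ i, ηc i ≤ η' i := by
    intro i
    exact Finset.inf'_le _ (Finset.self_mem_range_succ i)
  have hDcmono : ∀ i j, i ≤ j → Dc i ⊆ Dc j := by
    intro i j hij
    apply Finset.biUnion_subset_biUnion_of_subset_left
    exact Finset.range_subset_range.mpr (by omega)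
  have hDcle : ∀ i, D' i ⊆ Dc i := by
    intro i
    apply Finset.subset_biUnion_of_mem (u := D')
    exact Finset.self_mem_range_succ i
  set V : ℕ → Set (lip0 X x₀ ℝ) :=
    fun i => {g | ∀ x ∈ Dc i, |toFun' g x| ≤ ηc i} with hVdef
  set Bs : ℕ → Set (lip0 X x₀ ℝ) := fun i => {g | ‖g‖ ≤ 2^i} with hBsdef
  set S : ℕ → Set (lip0 X x₀ ℝ) :=
    fun m => ∑ i ∈ Finset.range (m+1), (V i ∩ Bs i) with hSdef
  have hWU : ∀ i, V i ∩ Bs i ⊆ U i ∩ Bs i := by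
    intro i g hg
    refine ⟨?_, hg.2⟩
    apply hsub' i
    refine ⟨?_, hg.2⟩
    intro x hx
    exact le_trans (hg.1 x (hDcle i hx)) (hηcle i)
  have hS_gamma : ∀ m, S m ⊆ gammaSet X x₀ ℝ U := by
    intro m g hg
    rw [gammaSet]
    exact Set.mem_iUnion.mpr ⟨m, sum_sets_mono (fun i => hWU i) (m+1) hg⟩
  have h0W : ∀ i, (0 : lip0 X x₀ ℝ) ∈ V i ∩ Bs i := by
    intro i
    constructor
    · intro x hx
      rw [toFun'_zero]
      simp only [Pi.zero_apply, abs_zero]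
      exact (hηcpos i).le
    · show ‖(0 : lip0 X x₀ ℝ)‖ ≤ 2^i
      rw [norm_zero]
      positivity
  have hSmono : ∀ m, S m ⊆ S (m+1) := by
    intro m g hg
    have h2 := Set.add_mem_add hg (h0W (m+1))
    rw [add_zero] at h2
    show g ∈ ∑ i ∈ Finset.range (m+1+1), V i ∩ Bs i
    rw [Finset.sum_range_succ]
    exact h2
  have hSnorm : ∀ m g, g ∈ S m → ‖g‖ ≤ 2^(m+1) := by
    intro m g hg
    obtain ⟨gf, hgf, rfl⟩ := sum_sets_decompose _ _ hg
    calc ‖∑ i ∈ Finset.range (m+1), gf i‖ ≤ ∑ i ∈ Finset.range (m+1), ‖gf i‖ :=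
          norm_sum_le _ _
      _ ≤ ∑ i ∈ Finset.range (m+1), (2:ℝ)^i := by
          apply Finset.sum_le_sum
          intro i hi
          exact (hgf i hi).2
      _ ≤ 2^(m+1) := sum_pow_two_le (m+1)
  -- Claim B: approximation within `S m` upgrades to membership in `S (m+2)`
  have claimB : ∀ m (f h : lip0 X x₀ ℝ), f ∈ S m → ‖h‖ ≤ 2^(m+2) →
      (∀ x ∈ Dc (m+2), |toFun' (h - f) x| < ηc (m+2)) → h ∈ S (m+2) := by
    intro m f h hf hh hpt
    have hS2 : S (m+2) = S m + (V (m+1) ∩ Bs (m+1)) + (V (m+2) ∩ Bs (m+2)) := by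
      show (∑ i ∈ Finset.range (m+2+1), V i ∩ Bs i) = _
      rw [Finset.sum_range_succ, Finset.sum_range_succ]
    have hptle : ∀ (t : ℝ) (k : ℕ), 0 ≤ t → t ≤ 1 → m+1 ≤ k → k ≤ m+2 →
        t • (h - f) ∈ V k := by
      intro t k ht ht1 hk1 hk2
      intro x hx
      have hx2 : x ∈ Dc (m+2) := hDcmono k (m+2) hk2 hx
      have := hpt x hx2
      have heq : toFun' (t • (h - f)) x = t * toFun' (h - f) x := by
        rw [toFun'_smul]; rfl
      rw [heq, abs_mul, abs_of_nonneg ht]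
      calc t * |toFun' (h - f) x| ≤ 1 * |toFun' (h - f) x| :=
            mul_le_mul_of_nonneg_right ht1 (abs_nonneg _)
        _ = |toFun' (h - f) x| := one_mul _
        _ ≤ ηc (m+2) := this.le
        _ ≤ ηc k := hηcmono k (m+2) hk2
    rw [hS2]
    by_cases hsmall : ‖h - f‖ ≤ 2^(m+1)
    · have he1 : h - f ∈ V (m+1) ∩ Bs (m+1) := by
        refine ⟨?_, hsmall⟩
        simpa using hptle 1 (m+1) zero_le_one le_rfl le_rfl (by omega)
      have : h = f + (h - f) + 0 := by abel
      rw [this]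
      exact Set.add_mem_add (Set.add_mem_add hf he1) (h0W (m+2))
    · push_neg at hsmall
      set t : ℝ := 2^(m+1) / ‖h - f‖ with htdef
      have hnorm_pos : (0:ℝ) < ‖h - f‖ := lt_of_le_of_lt (by positivity) hsmall
      have hne : ‖h - f‖ ≠ 0 := hnorm_pos.ne'
      have ht0 : 0 < t := by positivity
      have ht1 : t ≤ 1 := by
        rw [htdef, div_le_one hnorm_pos]
        exact hsmall.le
      have he1 : t • (h - f) ∈ V (m+1) ∩ Bs (m+1) := by
        refine ⟨hptle t (m+1) ht0.le ht1 le_rfl (by omega), ?_⟩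
        show ‖t • (h - f)‖ ≤ 2^(m+1)
        rw [norm_smul, Real.norm_eq_abs, abs_of_pos ht0, htdef]
        rw [div_mul_cancel₀ _ hne]
      have he2 : (1 - t) • (h - f) ∈ V (m+2) ∩ Bs (m+2) := by
        refine ⟨hptle (1-t) (m+2) (by linarith) (by linarith) (by omega) le_rfl, ?_⟩
        show ‖(1 - t) • (h - f)‖ ≤ 2^(m+2)
        rw [norm_smul, Real.norm_eq_abs, abs_of_nonneg (by linarith)]
        have hexp : (1 - t) * ‖h - f‖ = ‖h - f‖ - 2^(m+1) := by
          rw [htdef]; field_simp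
        rw [hexp]
        have hfn : ‖f‖ ≤ 2^(m+1) := hSnorm m f hf
        have : ‖h - f‖ ≤ ‖h‖ + ‖f‖ := norm_sub_le h f
        have h22 : (2:ℝ)^(m+2) + 2^(m+1) - 2^(m+1) = 2^(m+2) := by ring
        linarith
      have : h = f + t • (h - f) + (1 - t) • (h - f) := by
        have ht : t + (1 - t) = 1 := by ring
        rw [add_assoc, ← add_smul, ht, one_smul]
        abel
      rw [this]
      exact Set.add_mem_add (Set.add_mem_add hf he1) he2
  -- the strictly-open finite polar sets
  set Op : ℕ → Set (lip0 X x₀ ℝ) :=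
    fun k => {g | ∀ x ∈ Dc k, |toFun' g x| < ηc k} with hOpdef
  have hOpOpen : ∀ k, IsOpen[tp X x₀] (Op k) := by
    intro k
    letI := tp X x₀
    have : Op k = ⋂ x ∈ (Dc k : Finset X), {g : lip0 X x₀ ℝ | |toFun' g x| < ηc k} := by
      ext g; simp [hOpdef]
    rw [this]
    apply isOpen_biInter_finset
    intro x hx
    exact isOpen_lt (tp_continuous_eval x).abs continuous_const
  have hOp0 : ∀ k, (0 : lip0 X x₀ ℝ) ∈ Op k := by
    intro k x hx
    rw [toFun'_zero]
    simpa using hηcpos k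
  -- polar sets are closed
  have polar_closed : ∀ C : Finset (lip0 X x₀ ℝ →L[ℝ] ℝ),
      (∀ μ ∈ C, μ ∈ Submodule.span ℝ (Set.range (evalCLM X x₀))) →
      IsClosed[tp X x₀] {f : lip0 X x₀ ℝ | ∀ μ ∈ C, |μ f| ≤ 1} := by
    intro C hC
    letI := tp X x₀
    have : {f : lip0 X x₀ ℝ | ∀ μ ∈ C, |μ f| ≤ 1}
        = ⋂ μ ∈ C, {f : lip0 X x₀ ℝ | |μ f| ≤ 1} := by
      ext f; simp
    rw [this]
    apply isClosed_biInter
    intro μ hμ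
    exact isClosed_le (tp_continuous_span (hC μ hμ)).abs continuous_const
  -- the invariant
  set Inv : ℕ → Finset (lip0 X x₀ ℝ →L[ℝ] ℝ) → Prop := fun n C =>
    (∀ μ ∈ C, μ ∈ Submodule.span ℝ (Set.range (evalCLM X x₀))) ∧
    ({f : lip0 X x₀ ℝ | ∀ μ ∈ C, |μ f| ≤ 1} ∩ Bs n ⊆ S (3*n)) with hInvdef
  -- base case
  have base : ∃ C0, Inv 0 C0 := by
    obtain ⟨M, hM0, hM⟩ : ∃ M : ℝ, 0 ≤ M ∧ ∀ x ∈ Dc 0, dist x x₀ ≤ M := by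
      refine ⟨((Dc 0).sup fun x => (⟨dist x x₀, dist_nonneg⟩ : NNReal) : NNReal), ?_, ?_⟩
      · positivity
      · intro x hx
        have := Finset.le_sup (f := fun x => (⟨dist x x₀, dist_nonneg⟩ : NNReal)) hx
        exact_mod_cast this
    set r0 : ℝ := (M + 1) / ηc 0 with hr0def
    have hr0 : 0 < r0 := by
      rw [hr0def]
      have := hηcpos 0
      positivity
    obtain ⟨C0, hC0a, hC0b⟩ := fip_polar (Q := Set.univ)
      (by letI := tp X x₀; exact isClosed_univ)
      (b := (2:ℝ)^0) (by norm_num) hr0 (R := Op 0) (hOpOpen 0)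
      (by
        intro f hfn _
        intro x hx
        have h1 : |toFun' f x - toFun' f x₀| ≤ ‖f‖ * dist x x₀ := by
          calc |toFun' f x - toFun' f x₀| ≤ lipNorm X x₀ ℝ f * dist x x₀ :=
                norm_sub_le_lipNorm f x x₀
            _ = ‖f‖ * dist x x₀ := by rw [lip0_norm_def]
        rw [apply_base, sub_zero] at h1
        have h2 : ‖f‖ * dist x x₀ ≤ r0⁻¹ * M :=
          mul_le_mul hfn (hM x hx) dist_nonneg (by positivity)
        have h3 : r0⁻¹ * M < ηc 0 := by
          rw [hr0def]
          rw [inv_div]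
          rw [div_mul_eq_mul_div]
          rw [div_lt_iff₀ (by linarith)]
          have := hηcpos 0
          nlinarith
        exact lt_of_le_of_lt (le_trans h1 h2) h3)
    refine ⟨C0, fun μ hμ => (hC0a μ hμ).1, ?_⟩
    rintro f ⟨hf1, hf2⟩
    have hOp : f ∈ Op 0 := hC0b f (Set.mem_univ f) hf1 hf2
    have : f ∈ V 0 ∩ Bs 0 := ⟨fun x hx => (hOp x hx).le, hf2⟩
    show f ∈ ∑ i ∈ Finset.range 1, V i ∩ Bs i
    rw [Finset.sum_range_one]
    exact this
  -- inductive step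
  have step : ∀ n C, Inv n C → ∃ C',
      (∀ μ ∈ C', μ ∈ Submodule.span ℝ (Set.range (evalCLM X x₀)) ∧
        ‖μ‖ ≤ ((2:ℝ)^n)⁻¹) ∧ Inv (n+1) (C ∪ C') := by
    intro n C hC
    obtain ⟨C', hC'a, hC'b⟩ := fip_polar
      (Q := {f : lip0 X x₀ ℝ | ∀ μ ∈ C, |μ f| ≤ 1}) (polar_closed C hC.1)
      (b := (2:ℝ)^(n+1)) (by positivity) (r := ((2:ℝ)^n)⁻¹) (by positivity)
      (R := S (3*n) + Op (3*n+2)) (tp_open_add (hOpOpen (3*n+2)))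
      (by
        intro f hfn hfQ
        rw [inv_inv] at hfn
        have : f ∈ S (3*n) := hC.2 ⟨hfQ, hfn⟩
        have heq : f = f + 0 := by abel
        rw [heq]
        exact Set.add_mem_add this (hOp0 (3*n+2)))
    refine ⟨C', hC'a, ?_, ?_⟩
    · intro μ hμ
      rcases Finset.mem_union.mp hμ with h | h
      · exact hC.1 μ h
      · exact (hC'a μ h).1
    · rintro f ⟨hf1, hf2⟩
      have hfQ : ∀ μ ∈ C, |μ f| ≤ 1 := fun μ hμ =>
        hf1 μ (Finset.mem_union_left _ hμ)
      have hfC' : ∀ μ ∈ C', |μ f| ≤ 1 := fun μ hμ =>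
        hf1 μ (Finset.mem_union_right _ hμ)
      have hfR : f ∈ S (3*n) + Op (3*n+2) := hC'b f hfQ hfC' hf2
      obtain ⟨a, ha, e, he, hae⟩ := Set.mem_add.mp hfR
      have hfS : f ∈ S (3*n+2) := by
        apply claimB (3*n) a f ha
        · calc ‖f‖ ≤ 2^(n+1) := hf2
            _ ≤ 2^(3*n+2) := by
              apply pow_le_pow_right₀ one_le_two
              omega
        · intro x hx
          have : f - a = e := by rw [← hae]; abel
          rw [this]
          exact he x hx
      have h33 : 3*(n+1) = (3*n+2) + 1 := by ring
      rw [h33]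
      exact hSmono (3*n+2) hfS
  -- recursive construction
  choose stepC hstepC using step
  let F : (n : ℕ) → {C : Finset (lip0 X x₀ ℝ →L[ℝ] ℝ) // Inv n C} :=
    fun n => Nat.rec ⟨base.choose, base.choose_spec⟩
      (fun k ih => ⟨ih.1 ∪ stepC k ih.1 ih.2, (hstepC k ih.1 ih.2).2⟩) n
  have hFsucc : ∀ n, (F (n+1)).1 = (F n).1 ∪ stepC n (F n).1 (F n).2 := fun n => rfl
  have hFspan : ∀ n, ∀ μ ∈ (F n).1,
      μ ∈ Submodule.span ℝ (Set.range (evalCLM X x₀)) := fun n => (F n).2.1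
  have hFmono : ∀ n m, n ≤ m → (F n).1 ⊆ (F m).1 := by
    intro n m hnm
    induction hnm with
    | refl => exact subset_rfl
    | @step k hk ih =>
        rw [hFsucc k]
        exact ih.trans Finset.subset_union_left
  have hFdecomp : ∀ N n, N ≤ n → ∀ μ ∈ (F n).1,
      μ ∈ (F N).1 ∨ ∃ k, N ≤ k ∧ ‖μ‖ ≤ ((2:ℝ)^k)⁻¹ := by
    intro N n hNn
    induction hNn with
    | refl => exact fun μ hμ => Or.inl hμ
    | @step k hk ih =>
        intro μ hμ
        rw [hFsucc k] at hμ
        rcases Finset.mem_union.mp hμ with h' | h'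
        · exact ih μ h'
        · exact Or.inr ⟨k, hk, ((hstepC k (F k).1 (F k).2).1 μ h').2⟩
  -- the compact set
  set K0 : Set (lip0 X x₀ ℝ →L[ℝ] ℝ) := ⋃ n, ((F n).1 : Set (lip0 X x₀ ℝ →L[ℝ] ℝ))
    with hK0def
  have hK0tb : TotallyBounded K0 := by
    rw [Metric.totallyBounded_iff]
    intro ε hε
    obtain ⟨N, hN⟩ : ∃ N : ℕ, ((2:ℝ)^N)⁻¹ < ε := by
      obtain ⟨N, hN⟩ := exists_pow_lt_of_lt_one hε (by norm_num : (1:ℝ)/2 < 1)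
      refine ⟨N, ?_⟩
      calc ((2:ℝ)^N)⁻¹ = (1/2:ℝ)^N := by rw [one_div, inv_pow]
        _ < ε := hN
    refine ⟨((F N).1 : Set (lip0 X x₀ ℝ →L[ℝ] ℝ)) ∪ {0},
      ((F N).1.finite_toSet).union (Set.finite_singleton 0), ?_⟩
    intro μ hμ
    obtain ⟨n, hn⟩ := Set.mem_iUnion.mp hμ
    rcases le_total n N with hcase | hcase
    · exact Set.mem_biUnion (Set.mem_union_left _ (hFmono n N hcase hn))
        (Metric.mem_ball_self hε)
    · rcases hFdecomp N n hcase μ hn with hin | ⟨k, hk, hnorm⟩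
      · exact Set.mem_biUnion (Set.mem_union_left _ hin) (Metric.mem_ball_self hε)
      · apply Set.mem_biUnion (Set.mem_union_right _ (Set.mem_singleton 0))
        rw [Metric.mem_ball, dist_zero_right]
        calc ‖μ‖ ≤ ((2:ℝ)^k)⁻¹ := hnorm
          _ ≤ ((2:ℝ)^N)⁻¹ := by
            apply inv_anti₀ (by positivity)
            exact pow_le_pow_right₀ one_le_two hk
          _ < ε := hN
  have hK0span : K0 ⊆ (Submodule.span ℝ (Set.range (evalCLM X x₀)) :
      Set (lip0 X x₀ ℝ →L[ℝ] ℝ)) := by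
    intro μ hμ
    obtain ⟨n, hn⟩ := Set.mem_iUnion.mp hμ
    exact hFspan n μ hn
  have hfreeclosed : IsClosed (freeSpace X x₀ : Set (lip0 X x₀ ℝ →L[ℝ] ℝ)) :=
    Submodule.isClosed_topologicalClosure _
  have hK0free : K0 ⊆ (freeSpace X x₀ : Set (lip0 X x₀ ℝ →L[ℝ] ℝ)) := fun μ hμ =>
    Submodule.le_topologicalClosure _ (hK0span hμ)
  have hK1c : IsCompact (closure K0) :=
    TotallyBounded.isCompact_of_isClosed hK0tb.closure isClosed_closure
  have hK1free : closure K0 ⊆ (freeSpace X x₀ : Set (lip0 X x₀ ℝ →L[ℝ] ℝ)) :=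
    closure_minimal hK0free hfreeclosed
  obtain ⟨hLDc, hLDconv, hLDbal, hLDsup⟩ := cch_spec hK1c
  set LD := closure (convexHull ℝ (balancedHull ℝ (closure K0))) with hLDdef
  have hLDfree : LD ⊆ (freeSpace X x₀ : Set (lip0 X x₀ ℝ →L[ℝ] ℝ)) := by
    apply closure_minimal _ hfreeclosed
    apply convexHull_min _ (freeSpace X x₀).convex
    intro z hz
    rw [mem_balancedHull_iff] at hz
    obtain ⟨r, hr, hz⟩ := hz
    obtain ⟨y, hy, rfl⟩ := hz
    exact Submodule.smul_mem _ r (hK1free hy)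
  set LG : Set ↥(freeSpace X x₀) := Subtype.val ⁻¹' LD with hLGdef
  have himg : Subtype.val '' LG = LD := by
    apply Set.image_preimage_eq_of_subset
    rw [Subtype.range_coe]
    exact hLDfree
  refine ⟨LG, ?_, ?_, ?_, ?_⟩
  · apply Topology.IsInducing.subtypeVal.isCompact_iff.mpr
    have hLDc' := hLDc
    rw [← himg] at hLDc'
    exact hLDc'
  · intro x hx y hy a b ha hb hab
    have hx' : (x : lip0 X x₀ ℝ →L[ℝ] ℝ) ∈ LD := hx
    have hy' : (y : lip0 X x₀ ℝ →L[ℝ] ℝ) ∈ LD := hy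
    have h2 : a • (x : lip0 X x₀ ℝ →L[ℝ] ℝ) + b • (y : lip0 X x₀ ℝ →L[ℝ] ℝ) ∈ LD :=
      hLDconv hx' hy' ha hb hab
    exact h2
  · intro a ha
    rintro _ ⟨x, hx, rfl⟩
    have h2 : a • (x : lip0 X x₀ ℝ →L[ℝ] ℝ) ∈ LD :=
      hLDbal a ha (Set.smul_mem_smul_set hx)
    exact h2
  · intro g hg
    obtain ⟨n, hgn⟩ := pow_unbounded_of_one_lt ‖g‖ (one_lt_two : (1:ℝ) < 2)
    have hpolar : ∀ μ ∈ (F n).1, |μ g| ≤ 1 := by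
      intro μ hμ
      have hμfree : μ ∈ freeSpace X x₀ :=
        Submodule.le_topologicalClosure _ (hFspan n μ hμ)
      have hμLD : (⟨μ, hμfree⟩ : ↥(freeSpace X x₀)) ∈ LG := by
        show μ ∈ LD
        exact hLDsup (subset_closure (Set.mem_iUnion.mpr ⟨n, hμ⟩))
      exact hg ⟨μ, hμfree⟩ hμLD
    have hgS : g ∈ S (3*n) := (F n).2.2 ⟨hpolar, hgn.le⟩
    exact hS_gamma (3*n) hgS

end AuxHard


set_option maxHeartbeats 1000000 in
set_option synthInstance.maxHeartbeats 400000 in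
/-- The evaluation map `f ↦ T_f`, `T_f(φ) = φ(f)`, is a topological
isomorphism from `(Lip₀(X), τ_γ)` onto `F(X)'_c`, the dual of the Banach space `F(X)`
with the topology of uniform convergence on convex balanced compact subsets of `F(X)`. -/
theorem stmt8 (X : Type*) [MetricSpace X] (x₀ : X) :
    ∃ e : lip0 X x₀ ℝ ≃ₗ[ℝ] ((freeSpace X x₀) →L[ℝ] ℝ),
      (∀ (f : lip0 X x₀ ℝ) (φ : freeSpace X x₀), e f φ = φ.1 f) ∧
      @Continuous _ _ (tauGamma X x₀ ℝ) (dualcTop ↥(freeSpace X x₀)) e ∧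
      @Continuous _ _ (dualcTop ↥(freeSpace X x₀)) (tauGamma X x₀ ℝ) e.symm := by
  classical
  set 𝔖 : Set (Set ↥(freeSpace X x₀)) :=
    {L : Set ↥(freeSpace X x₀) | IsCompact L ∧ Convex ℝ L ∧ Balanced ℝ L} with h𝔖def
  refine ⟨eEquiv X x₀, fun f φ => rfl, ?_, ?_⟩
  · -- continuity from the mixed topology to the dual topology
    rw [continuous_def]
    intro O hO
    rw [dualcTop] at hO
    obtain ⟨O', hO', hOeq⟩ := isOpen_induced_iff.mp hO
    rw [isOpen_tauGamma_iff]
    intro f hf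
    have hF₀ : (UniformOnFun.ofFun 𝔖 ⇑(eEquiv X x₀ f)) ∈ O' := by
      have : eEquiv X x₀ f ∈ O := hf
      rw [← hOeq] at this
      exact this
    have hO'nhds : O' ∈ @nhds _ _ (UniformOnFun.ofFun 𝔖 ⇑(eEquiv X x₀ f)) :=
      hO'.mem_nhds hF₀
    have hbasis := UniformOnFun.hasBasis_nhds ↥(freeSpace X x₀) ℝ 𝔖
      (UniformOnFun.ofFun 𝔖 ⇑(eEquiv X x₀ f)) (dualc_family_nonempty (G := ↥(freeSpace X x₀))) (dualc_family_directed (G := ↥(freeSpace X x₀)))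
    rw [hbasis.mem_iff] at hO'nhds
    obtain ⟨⟨L, Vent⟩, ⟨hL𝔖, hVent⟩, hsub⟩ := hO'nhds
    obtain ⟨ε, hε, hεV⟩ := Metric.mem_uniformity_dist.mp hVent
    obtain ⟨Useq, hUcond, hUb⟩ := easy_core hL𝔖.1 hε
    refine ⟨Useq, hUcond, ?_⟩
    rintro _ ⟨g, hg, rfl⟩
    show eEquiv X x₀ (f + g) ∈ O
    rw [← hOeq]
    apply hsub
    intro φ hφ
    apply hεV
    have h1 : eEquiv X x₀ (f + g) φ = φ.1 f + φ.1 g := by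
      rw [eEquiv_apply, map_add]
    have h2 : eEquiv X x₀ f φ = φ.1 f := eEquiv_apply f φ
    show dist (eEquiv X x₀ (f + g) φ) (eEquiv X x₀ f φ) < ε
    rw [h1, h2, Real.dist_eq, add_sub_cancel_left]
    exact hUb g hg φ hφ
  · -- continuity from the dual topology to the mixed topology
    rw [continuous_def]
    intro O hO
    rw [@isOpen_iff_mem_nhds _ (dualcTop ↥(freeSpace X x₀))]
    intro T₀ hT₀
    have hnhds : @nhds _ (dualcTop ↥(freeSpace X x₀)) T₀
        = Filter.comap (fun φ : ↥(freeSpace X x₀) →L[ℝ] ℝ => UniformOnFun.ofFun 𝔖 ⇑φ)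
          (@nhds _ _ (UniformOnFun.ofFun 𝔖 ⇑T₀)) := nhds_induced _ _
    rw [hnhds]
    obtain ⟨Useq, hUcond, hUsub⟩ := isOpen_tauGamma_iff.mp hO _ hT₀
    obtain ⟨L, hLc, hLconv, hLbal, hLpolar⟩ := hard_core hUcond
    have hVmem : {p : ℝ × ℝ | dist p.1 p.2 ≤ 1} ∈ uniformity ℝ :=
      Filter.mem_of_superset (Metric.dist_mem_uniformity one_pos)
        (fun p hp => show dist p.1 p.2 ≤ 1 from le_of_lt hp)
    refine Filter.mem_comap.mpr
      ⟨{G' : UniformOnFun ↥(freeSpace X x₀) ℝ 𝔖 | ∀ φ ∈ L,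
          (UniformOnFun.toFun 𝔖 (UniformOnFun.ofFun 𝔖 ⇑T₀) φ,
           UniformOnFun.toFun 𝔖 G' φ) ∈ {p : ℝ × ℝ | dist p.1 p.2 ≤ 1}}, ?_, ?_⟩
    · exact UniformOnFun.gen_mem_nhds (β := ℝ) (𝔖 := 𝔖)
        (UniformOnFun.ofFun 𝔖 ⇑T₀) ⟨hLc, hLconv, hLbal⟩ hVmem
    · intro T hT
      simp only [Set.mem_preimage, Set.mem_setOf_eq] at hT
      show (eEquiv X x₀).symm T ∈ O
      set g : lip0 X x₀ ℝ := (eEquiv X x₀).symm T - (eEquiv X x₀).symm T₀ with hgdef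
      have hgmem : g ∈ gammaSet X x₀ ℝ Useq := by
        apply hLpolar
        intro φ hφ
        have h1 : (φ : lip0 X x₀ ℝ →L[ℝ] ℝ) g = T φ - T₀ φ := by
          rw [hgdef]
          have ha : (φ : lip0 X x₀ ℝ →L[ℝ] ℝ) ((eEquiv X x₀).symm T) = T φ := by
            rw [← eEquiv_apply ((eEquiv X x₀).symm T) φ,
              (eEquiv X x₀).apply_symm_apply]
          have hb : (φ : lip0 X x₀ ℝ →L[ℝ] ℝ) ((eEquiv X x₀).symm T₀) = T₀ φ := by
            rw [← eEquiv_apply ((eEquiv X x₀).symm T₀) φ,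
              (eEquiv X x₀).apply_symm_apply]
          rw [map_sub, ha, hb]
        rw [h1]
        have := hT φ hφ
        rw [Real.dist_eq] at this
        rw [abs_sub_comm]
        exact this
      apply hUsub
      refine ⟨g, hgmem, ?_⟩
      show (eEquiv X x₀).symm T₀ + g = (eEquiv X x₀).symm T
      rw [hgdef]
      abel

end LipApprox
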